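/- Let V be a lex-segment of monomials of degree j in k[x_1,...,x_n] (with respect to the degree-lexicographic order with x_1 > x_2 > ... > x_n), and let v be the lexicographically smallest monomial in V. If u is a monomial of degree j-1 dividing v and u belongs to a lex-segment W of degree j-1 monomials whose image under multiplication by the variables lands in V, then u is the lexicographically smallest monomial of W. More precisely: if W is a lex-segment in degree j-1, V is a lex-segment in degree j with S_1·W ⊆ span(V), v is the lex-smallest monomial of V, and u ∈ W divides v, then u is the lex-smallest monomial of W. -/
import Mathlib


open MvPolynomial

noncomputable section EGHDefs

/-- Total degree of an exponent vector. -/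
def mdeg {n : ℕ} (a : Fin n →₀ ℕ) : ℕ := a.sum fun _ e => e

/-- `monLT a b` : the monomial `x^a` is strictly smaller than `x^b` in the
lexicographic order with `x_1 > x_2 > ... > x_n`. -/
def monLT {n : ℕ} (a b : Fin n →₀ ℕ) : Prop :=
  ∃ i : Fin n, (∀ j : Fin n, j < i → a j = b j) ∧ a i < b i

/-- A lex-segment of exponent vectors in degree `j`. -/
def LexSeg {n : ℕ} (j : ℕ) (V : Set (Fin n →₀ ℕ)) : Prop :=
  (∀ a ∈ V, mdeg a = j) ∧ ∀ a ∈ V, ∀ b : Fin n →₀ ℕ, mdeg b = j → monLT a b → b ∈ V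

variable (k : Type) [Field k] {n : ℕ}

/-- Hilbert function of a (homogeneous) ideal `I`: the `k`-dimension of its degree `j` part. -/
def HF (I : Ideal (MvPolynomial (Fin n) k)) (j : ℕ) : ℕ :=
  Module.finrank k
    ↥(Submodule.restrictScalars k (I : Submodule (MvPolynomial (Fin n) k) (MvPolynomial (Fin n) k))
      ⊓ homogeneousSubmodule (Fin n) k j)

/-- Hilbert function of the quotient `S/I` in degree `j`. -/
def HFq (I : Ideal (MvPolynomial (Fin n) k)) (j : ℕ) : ℕ :=
  Module.finrank k
    ↥((homogeneousSubmodule (Fin n) k j).map (Ideal.Quotient.mkₐ k I).toLinearMap)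

/-- `I` is a homogeneous ideal. -/
def IsHomog (I : Ideal (MvPolynomial (Fin n) k)) : Prop :=
  ∀ f ∈ I, ∀ j : ℕ, homogeneousComponent j f ∈ I

/-- `f 0, f 1, ..., f (h-1)` is a regular sequence. -/
def IsRegSeq {h : ℕ} (f : Fin h → MvPolynomial (Fin n) k) : Prop :=
  Ideal.span (Set.range f) ≠ ⊤ ∧
  ∀ i : Fin h, ∀ g : MvPolynomial (Fin n) k,
    g * f i ∈ Ideal.span (f '' {j | j < i}) → g ∈ Ideal.span (f '' {j | j < i})

/-- The monomial complete intersection `(x_1^{d_1}, ..., x_h^{d_h})`. -/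
def powIdeal {h : ℕ} (hh : h ≤ n) (d : Fin h → ℕ) : Ideal (MvPolynomial (Fin n) k) :=
  Ideal.span (Set.range fun i : Fin h => (X (Fin.castLE hh i) : MvPolynomial (Fin n) k) ^ d i)

/-- `L` is a lexicographic (monomial) ideal. -/
def IsLexIdeal (L : Ideal (MvPolynomial (Fin n) k)) : Prop :=
  (∀ f ∈ L, ∀ a ∈ f.support, (monomial a (1 : k)) ∈ L) ∧
  ∀ a b : Fin n →₀ ℕ, mdeg a = mdeg b → monLT a b →
    (monomial a (1 : k)) ∈ L → monomial b (1 : k) ∈ L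

/-- `𝕃` is a `d`-LPP (lex-plus-power) ideal. -/
def IsLPP {h : ℕ} (hh : h ≤ n) (d : Fin h → ℕ) (𝕃 : Ideal (MvPolynomial (Fin n) k)) : Prop :=
  ∃ L : Ideal (MvPolynomial (Fin n) k), IsLexIdeal k L ∧ 𝕃 = powIdeal k hh d ⊔ L

/-- `I` contains a regular sequence of degrees `d`. -/
def ContainsRS {h : ℕ} (d : Fin h → ℕ) (I : Ideal (MvPolynomial (Fin n) k)) : Prop :=
  ∃ f : Fin h → MvPolynomial (Fin n) k,
    IsRegSeq k f ∧ (∀ i, (f i).IsHomogeneous (d i)) ∧ ∀ i, f i ∈ I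

/-- `I` satisfies the Eisenbud-Green-Harris conjecture for the degree sequence `d`:
there is a `d`-LPP ideal with the same Hilbert function as `I`. -/
def EGH {h : ℕ} (hh : h ≤ n) (d : Fin h → ℕ) (I : Ideal (MvPolynomial (Fin n) k)) : Prop :=
  ∃ 𝕃 : Ideal (MvPolynomial (Fin n) k), IsLPP k hh d 𝕃 ∧ ∀ j : ℕ, HF k 𝕃 j = HF k I j

end EGHDefs

theorem monLT_irrefl {n : ℕ} (a : Fin n →₀ ℕ) : ¬ monLT a a := by
  rintro ⟨i, _, h⟩; exact lt_irrefl _ h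

theorem monLT_asymm {n : ℕ} {a b : Fin n →₀ ℕ} (h1 : monLT a b) (h2 : monLT b a) : False := by
  obtain ⟨i, hpre, hlt⟩ := h1
  obtain ⟨i', hpre', hlt'⟩ := h2
  rcases lt_trichotomy i i' with h | h | h
  · exact absurd (hpre' i h).symm (ne_of_lt hlt)
  · subst h; exact lt_irrefl _ (hlt.trans hlt')
  · exact absurd (hpre i' h).symm (ne_of_lt hlt')

theorem monLT_total {n : ℕ} (a b : Fin n →₀ ℕ) (hne : ¬ ∀ j, a j = b j) :
    monLT a b ∨ monLT b a := by
  classical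
  have hnonempty : (Finset.univ.filter fun j : Fin n => a j ≠ b j).Nonempty := by
    push_neg at hne
    obtain ⟨j, hj⟩ := hne
    exact ⟨j, by simp [hj]⟩
  set i := Finset.min' _ hnonempty with hi
  have himem : a i ≠ b i := by
    have := Finset.min'_mem _ hnonempty
    simpa using this
  have hpre : ∀ j : Fin n, j < i → a j = b j := by
    intro j hj
    by_contra hjne
    exact absurd (Finset.min'_le _ j (by simp [hjne])) (not_le_of_gt hj)
  rcases lt_or_gt_of_ne himem with h | h
  · exact Or.inl ⟨i, hpre, h⟩
  · exact Or.inr ⟨i, fun j hj => (hpre j hj).symm, h⟩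

theorem monLT_add_right {n : ℕ} {a b : Fin n →₀ ℕ} (h : monLT a b) (c : Fin n →₀ ℕ) :
    monLT (a + c) (b + c) := by
  obtain ⟨i, hpre, hlt⟩ := h
  exact ⟨i, fun j hj => by simp [hpre j hj], by simpa using hlt⟩

/-- if `v` is the lex-smallest monomial of a lex-segment `V` in degree `j`,
`W` is a lex-segment in degree `j-1` with `S_1 · W ⊆ V`, and `u ∈ W` divides `v`, then `u`
is the lex-smallest monomial of `W`. -/
theorem stmt2 (n j : ℕ) (hj : 1 ≤ j) (V W : Set (Fin n →₀ ℕ))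
    (hV : LexSeg j V) (hW : LexSeg (j - 1) W)
    (hmul : ∀ w ∈ W, ∀ i : Fin n, w + Finsupp.single i 1 ∈ V)
    (v : Fin n →₀ ℕ) (hv : v ∈ V) (hvmin : ∀ a ∈ V, a = v ∨ monLT v a)
    (u : Fin n →₀ ℕ) (hu : u ∈ W) (i : Fin n) (hdiv : u + Finsupp.single i 1 = v) :
    ∀ w ∈ W, w = u ∨ monLT u w := by
  intro w hwW
  by_contra hcon
  push_neg at hcon
  obtain ⟨hne, hnlt⟩ := hcon
  -- trichotomy: since w ≠ u and ¬ monLT u w, we get monLT w u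
  have hlt : monLT w u := by
    rcases monLT_total w u (fun h => hne (by ext j; exact h j)) with h | h
    · exact h
    · exact absurd h hnlt
  have hwV : w + Finsupp.single i 1 ∈ V := hmul w hwW i
  have hltv : monLT (w + Finsupp.single i 1) v := by
    rw [← hdiv]
    exact monLT_add_right hlt _
  rcases hvmin _ hwV with h | h
  · exact monLT_irrefl v (h ▸ hltv)
  · exact monLT_asymm hltv h
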